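/- Let α, β > -1, n ≥ 1, and let ζ_{n,1},…,ζ_{n,n} be the zeros of the Jacobi polynomial P_n^{(α,β)}. Then for any convex function f : [-1,1] → ℝ, (1/n) Σ_{i=1}^{n} f(ζ_{n,i}) ≤ ((n+β) f(1) + (n+α) f(-1)) / (2n + α + β). -/

import Mathlib

/-- The Jacobi polynomial `P_n^{(α,β)}`, as a real function, defined via the
Rodrigues formula. -/
noncomputable def jacobiFun (n : ℕ) (α β : ℝ) (x : ℝ) : ℝ :=
  ((-1 : ℝ) ^ n / (2 ^ n * n.factorial)) * (1 - x) ^ (-α) * (1 + x) ^ (-β) *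
    iteratedDeriv n (fun z : ℝ => (1 - z) ^ ((n : ℝ) + α) * (1 + z) ^ ((n : ℝ) + β)) x


open Finset

/-- falling factorial -/
noncomputable def ffac (a : ℝ) (k : ℕ) : ℝ := ∏ i ∈ Finset.range k, (a - i)

@[simp] lemma ffac_zero (a : ℝ) : ffac a 0 = 1 := by simp [ffac]

lemma ffac_succ (a : ℝ) (k : ℕ) : ffac a (k + 1) = ffac a k * (a - k) := by
  simp [ffac, Finset.prod_range_succ]

lemma ffac_succ' (a : ℝ) (k : ℕ) : ffac a (k + 1) = a * ffac (a - 1) k := by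
  rw [ffac, Finset.prod_range_succ']
  rw [mul_comm]
  congr 1
  · norm_num
  · apply Finset.prod_congr rfl
    intro i _
    push_cast
    ring

/-- Vandermonde for falling factorials -/
lemma ffac_vandermonde (a b : ℝ) : ∀ n : ℕ,
    ∑ k ∈ range (n + 1), (n.choose k : ℝ) * ffac a (n - k) * ffac b k = ffac (a + b) n := by
  intro n
  induction n with
  | zero => simp
  | succ n ih =>
    have h1 : ∀ k ∈ range (n + 1 + 1), ((n+1).choose k : ℝ) * ffac a (n + 1 - k) * ffac b k
        = (n.choose k : ℝ) * ffac a (n + 1 - k) * ffac b k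
          + (if k = 0 then 0 else (n.choose (k-1) : ℝ) * ffac a (n + 1 - k) * ffac b k) := by
      intro k hk
      rcases k with _ | k
      · simp
      · rw [Nat.choose_succ_succ]
        push_cast
        ring
    rw [Finset.sum_congr rfl h1, Finset.sum_add_distrib]
    have h2 : ∑ k ∈ range (n + 1 + 1), (n.choose k : ℝ) * ffac a (n + 1 - k) * ffac b k
        = ∑ k ∈ range (n + 1), (n.choose k : ℝ) * ffac a (n - k) * ffac b k * (a - (n - k : ℝ)) := by
      rw [Finset.sum_range_succ, Nat.choose_succ_self]
      simp only [Nat.cast_zero, zero_mul, add_zero]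
      apply Finset.sum_congr rfl
      intro k hk
      have hk' : k ≤ n := Nat.lt_succ_iff.mp (Finset.mem_range.mp hk)
      rw [Nat.succ_sub hk', ffac_succ]
      rw [Nat.cast_sub hk']
      ring
    have h3 : ∑ k ∈ range (n + 1 + 1),
          (if k = 0 then (0:ℝ) else (n.choose (k-1) : ℝ) * ffac a (n + 1 - k) * ffac b k)
        = ∑ k ∈ range (n + 1), (n.choose k : ℝ) * ffac a (n - k) * ffac b k * (b - (k : ℝ)) := by
      rw [Finset.sum_range_succ']
      simp only [Nat.sub_zero, if_true, add_zero, Nat.succ_sub_succ]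
      apply Finset.sum_congr rfl
      intro k _
      rw [if_neg (Nat.succ_ne_zero k), ffac_succ]
      ring
    rw [h2, h3, ← Finset.sum_add_distrib, ffac_succ, ← ih, Finset.sum_mul]
    apply Finset.sum_congr rfl
    intro k hk
    have hk' : (k : ℝ) ≤ n := by
      exact_mod_cast Nat.lt_succ_iff.mp (Finset.mem_range.mp hk)
    ring

lemma ffac_vandermonde_k (a b : ℝ) (m : ℕ) :
    ∑ k ∈ range (m + 2), (k : ℝ) * ((m+1).choose k) * ffac a (m + 1 - k) * ffac b k
      = (m + 1) * b * ffac (a + b - 1) m := by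
  rw [Finset.sum_range_succ']
  simp only [Nat.cast_zero, zero_mul, add_zero, Nat.succ_sub_succ]
  have h : ∀ j ∈ range (m+1), ((j+1 : ℕ) : ℝ) * ((m+1).choose (j+1)) * ffac a (m - j) * ffac b (j+1)
      = ((m:ℝ)+1) * b * ((m.choose j : ℝ) * ffac a (m - j) * ffac (b-1) j) := by
    intro j _
    have hc : ((m+1).choose (j+1) : ℝ) * (j+1) = (m+1) * (m.choose j) := by
      rw_mod_cast [← Nat.add_one_mul_choose_eq]
    rw [ffac_succ']
    push_cast at hc ⊢
    linear_combination (ffac a (m-j) * b * ffac (b-1) j) * hc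
  rw [Finset.sum_congr rfl h, ← Finset.mul_sum, ffac_vandermonde a (b-1) m]
  ring_nf

open Set in
lemma hasDerivAt_one_sub_rpow {x r : ℝ} (hx : x ∈ Ioo (-1:ℝ) 1) :
    HasDerivAt (fun y : ℝ => (1 - y) ^ r) (-(r * (1 - x) ^ (r - 1))) x := by
  have h : HasDerivAt (fun y : ℝ => 1 - y) (-1) x := by
    simpa using (hasDerivAt_id x).const_sub 1
  have := h.rpow_const (p := r) (Or.inl (by intro h0; nlinarith [hx.2] : (1:ℝ) - x ≠ 0))
  simpa using this

open Set in
lemma hasDerivAt_one_add_rpow {x r : ℝ} (hx : x ∈ Ioo (-1:ℝ) 1) :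
    HasDerivAt (fun y : ℝ => (1 + y) ^ r) (r * (1 + x) ^ (r - 1)) x := by
  have h : HasDerivAt (fun y : ℝ => 1 + y) 1 x := by
    simpa using (hasDerivAt_id x).const_add 1
  have := h.rpow_const (p := r) (Or.inl (by linarith [hx.1] : (1:ℝ) + x ≠ 0))
  simpa using this

open Set in
lemma iteratedDeriv_formula (p q : ℝ) : ∀ m : ℕ, ∀ x ∈ Ioo (-1:ℝ) 1,
    iteratedDeriv m (fun z : ℝ => (1 - z) ^ p * (1 + z) ^ q) x
      = ∑ k ∈ range (m+1), (-1:ℝ)^(m+k) * (m.choose k) * ffac p (m-k) * ffac q k *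
          (1-x) ^ (p - m + k) * (1+x) ^ (q - k) := by
  intro m
  induction m with
  | zero => intro x _; simp [iteratedDeriv_zero]
  | succ m ih =>
    intro x hx
    -- the candidate derivative of each summand
    set c : ℕ → ℝ := fun k => (-1:ℝ)^(m+k) * (m.choose k) * ffac p (m-k) * ffac q k with hc
    have hderiv : HasDerivAt (fun y => ∑ k ∈ range (m+1),
          c k * (1-y) ^ (p - m + k) * (1+y) ^ (q - k))
        (∑ k ∈ range (m+1), (c k * -((p - m + k) * (1-x) ^ (p - m + k - 1)) * (1+x) ^ (q - k)
            + c k * (1-x) ^ (p - m + k) * ((q - k) * (1+x) ^ (q - k - 1)))) x := by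
      apply HasDerivAt.fun_sum
      intro k _
      have h1 := hasDerivAt_one_sub_rpow (r := p - m + k) hx
      have h2 := hasDerivAt_one_add_rpow (r := q - k) hx
      exact (h1.const_mul (c k)).mul h2
    have heq : iteratedDeriv (m+1) (fun z : ℝ => (1 - z) ^ p * (1 + z) ^ q) x
        = deriv (fun y => ∑ k ∈ range (m+1),
            c k * (1-y) ^ (p - m + k) * (1+y) ^ (q - k)) x := by
      rw [iteratedDeriv_succ]
      apply Filter.EventuallyEq.deriv_eq
      filter_upwards [isOpen_Ioo.mem_nhds hx] with y hy
      rw [ih y hy]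
    rw [heq, hderiv.deriv]
    -- now the combinatorial reindexing
    have h1 : ∀ k ∈ range (m+2), (-1:ℝ)^(m+1+k) * ((m+1).choose k) * ffac p (m+1-k) * ffac q k *
          (1-x) ^ (p - (m+1:ℕ) + k) * (1+x) ^ (q - k)
        = (-1:ℝ)^(m+1+k) * (m.choose k) * ffac p (m+1-k) * ffac q k *
          (1-x) ^ (p - (m+1:ℕ) + k) * (1+x) ^ (q - k)
        + (if k = 0 then 0 else (-1:ℝ)^(m+1+k) * (m.choose (k-1)) * ffac p (m+1-k) * ffac q k *
          (1-x) ^ (p - (m+1:ℕ) + k) * (1+x) ^ (q - k)) := by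
      intro k _
      rcases k with _ | k
      · simp
      · rw [Nat.choose_succ_succ]
        rw [if_neg (Nat.succ_ne_zero k)]
        push_cast
        ring
    have h2 : ∑ k ∈ range (m+2), (-1:ℝ)^(m+1+k) * (m.choose k) * ffac p (m+1-k) * ffac q k *
          (1-x) ^ (p - (m+1:ℕ) + k) * (1+x) ^ (q - k)
        = ∑ k ∈ range (m+1), c k * -((p - m + k) * (1-x) ^ (p - m + k - 1)) * (1+x) ^ (q - k) := by
      rw [Finset.sum_range_succ, Nat.choose_succ_self]
      simp only [Nat.cast_zero, mul_zero, zero_mul, add_zero]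
      apply Finset.sum_congr rfl
      intro k hk
      have hk' : k ≤ m := Nat.lt_succ_iff.mp (Finset.mem_range.mp hk)
      rw [Nat.succ_sub hk', ffac_succ, hc]
      have hcast : ((m - k : ℕ) : ℝ) = (m : ℝ) - k := by
        rw [Nat.cast_sub hk']
      rw [hcast]
      have hexp : p - ((m:ℕ)+1 : ℕ) + k = p - m + k - 1 := by push_cast; ring
      rw [hexp]
      push_cast
      ring
    have h3 : ∑ k ∈ range (m+2), (if k = 0 then (0:ℝ) else (-1:ℝ)^(m+1+k) * (m.choose (k-1)) * ffac p (m+1-k) * ffac q k *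
          (1-x) ^ (p - (m+1:ℕ) + k) * (1+x) ^ (q - k))
        = ∑ k ∈ range (m+1), c k * (1-x) ^ (p - m + k) * ((q - k) * (1+x) ^ (q - k - 1)) := by
      rw [Finset.sum_range_succ']
      simp only [Nat.sub_zero, if_true, add_zero, Nat.succ_sub_succ]
      apply Finset.sum_congr rfl
      intro k _
      rw [if_neg (Nat.succ_ne_zero k), ffac_succ, hc]
      have hexp : p - ((m:ℕ)+1 : ℕ) + ((k:ℕ)+1 : ℕ) = p - m + k := by push_cast; ring
      rw [hexp]
      have hexp2 : q - ((k:ℕ)+1 : ℕ) = q - k - 1 := by push_cast; ring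
      rw [hexp2]
      push_cast
      ring
    rw [Finset.sum_add_distrib, ← h2, ← h3, ← Finset.sum_add_distrib]
    exact (Finset.sum_congr rfl h1).symm

open Polynomial in
noncomputable def jacP (n : ℕ) (α β : ℝ) : Polynomial ℝ :=
  ∑ k ∈ range (n+1), Polynomial.C ((n.choose k : ℝ) * ffac ((n:ℝ)+α) (n-k) * ffac ((n:ℝ)+β) k)
    * (X - C 1)^k * (X - C (-1))^(n-k)

open Polynomial in
lemma jacM_monic (n k : ℕ) : ((X - C (1:ℝ))^k * (X - C (-1:ℝ))^(n-k)).Monic :=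
  ((monic_X_sub_C 1).pow k).mul ((monic_X_sub_C (-1)).pow (n-k))

open Polynomial in
lemma jacM_natDegree (n k : ℕ) (hk : k ≤ n) :
    ((X - C (1:ℝ))^k * (X - C (-1:ℝ))^(n-k)).natDegree = n := by
  rw [((monic_X_sub_C (1:ℝ)).pow k).natDegree_mul ((monic_X_sub_C (-1:ℝ)).pow (n-k))]
  rw [natDegree_pow, natDegree_pow, natDegree_X_sub_C, natDegree_X_sub_C]
  omega

open Polynomial in
lemma jacM_nextCoeff (n k : ℕ) (hk : k ≤ n) :
    ((X - C (1:ℝ))^k * (X - C (-1:ℝ))^(n-k)).nextCoeff = (n:ℝ) - 2*k := by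
  rw [((monic_X_sub_C (1:ℝ)).pow k).nextCoeff_mul ((monic_X_sub_C (-1:ℝ)).pow (n-k)),
    Monic.nextCoeff_pow (monic_X_sub_C _), Monic.nextCoeff_pow (monic_X_sub_C _),
    nextCoeff_X_sub_C, nextCoeff_X_sub_C]
  have h : ((n - k : ℕ) : ℝ) = (n:ℝ) - k := by rw [Nat.cast_sub hk]
  simp only [nsmul_eq_mul, mul_one, mul_neg_one, h]
  ring

open Polynomial in
lemma jacP_coeff_n (n : ℕ) (α β : ℝ) :
    (jacP n α β).coeff n = ffac (2*n + α + β) n := by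
  rw [jacP, Polynomial.finset_sum_coeff]
  have h : ∀ k ∈ range (n+1),
      (Polynomial.C ((n.choose k : ℝ) * ffac ((n:ℝ)+α) (n-k) * ffac ((n:ℝ)+β) k)
        * (X - C 1)^k * (X - C (-1))^(n-k)).coeff n
      = (n.choose k : ℝ) * ffac ((n:ℝ)+α) (n-k) * ffac ((n:ℝ)+β) k := by
    intro k hk
    have hk' : k ≤ n := Nat.lt_succ_iff.mp (Finset.mem_range.mp hk)
    rw [mul_assoc, Polynomial.coeff_C_mul]
    have : ((X - C (1:ℝ))^k * (X - C (-1:ℝ))^(n-k)).coeff n = 1 := by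
      have hm := jacM_monic n k
      have := hm.coeff_natDegree
      rwa [jacM_natDegree n k hk'] at this
    rw [this, mul_one]
  rw [Finset.sum_congr rfl h]
  have hv := ffac_vandermonde ((n:ℝ)+α) ((n:ℝ)+β) n
  rw [hv]
  ring_nf

open Polynomial in
lemma jacP_coeff_pred (n : ℕ) (α β : ℝ) (hn : 1 ≤ n) :
    (jacP n α β).coeff (n-1) = (n:ℝ) * (α - β) * ffac (2*n + α + β - 1) (n-1) := by
  obtain ⟨m, rfl⟩ : ∃ m, n = m + 1 := ⟨n - 1, by omega⟩
  rw [jacP, Polynomial.finset_sum_coeff]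
  have h : ∀ k ∈ range (m+2),
      (Polynomial.C (((m+1).choose k : ℝ) * ffac (((m+1:ℕ):ℝ) + α) (m+1-k) * ffac (((m+1:ℕ):ℝ) + β) k)
        * (X - C 1)^k * (X - C (-1))^(m+1-k)).coeff (m+1-1)
      = (((m+1).choose k : ℝ) * ffac (((m+1:ℕ):ℝ) + α) (m+1-k) * ffac (((m+1:ℕ):ℝ) + β) k)
          * (((m+1:ℕ):ℝ) - 2*k) := by
    intro k hk
    have hk' : k ≤ m + 1 := Nat.lt_succ_iff.mp (Finset.mem_range.mp hk)
    rw [mul_assoc, Polynomial.coeff_C_mul]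
    congr 1
    have hnc := jacM_nextCoeff (m+1) k hk'
    rw [Polynomial.nextCoeff, jacM_natDegree (m+1) k hk', if_neg (Nat.succ_ne_zero m)] at hnc
    exact hnc
  rw [Finset.sum_congr rfl h]
  have split : ∀ k ∈ range (m+2),
      (((m+1).choose k : ℝ) * ffac (((m+1:ℕ):ℝ) + α) (m+1-k) * ffac (((m+1:ℕ):ℝ) + β) k)
          * (((m+1:ℕ):ℝ) - 2*k)
      = ((m+1:ℕ):ℝ) * ((((m+1).choose k : ℝ)) * ffac (((m+1:ℕ):ℝ) + α) (m+1-k) * ffac (((m+1:ℕ):ℝ) + β) k)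
        - 2 * ((k:ℝ) * (((m+1).choose k : ℝ)) * ffac (((m+1:ℕ):ℝ) + α) (m+1-k) * ffac (((m+1:ℕ):ℝ) + β) k) := by
    intro k _
    push_cast
    ring
  rw [Finset.sum_congr rfl split, Finset.sum_sub_distrib, ← Finset.mul_sum, ← Finset.mul_sum,
    ffac_vandermonde, ffac_vandermonde_k]
  have hA : ((m+1:ℕ):ℝ) + α + (((m+1:ℕ):ℝ) + β) = 2*((m+1:ℕ):ℝ) + α + β := by push_cast; ring
  rw [hA]
  have hff : ffac (2*((m+1:ℕ):ℝ) + α + β) (m+1) = (2*((m+1:ℕ):ℝ) + α + β) * ffac (2*((m+1:ℕ):ℝ) + α + β - 1) m := ffac_succ' _ m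
  rw [hff]
  have hm : (m + 1 - 1 : ℕ) = m := rfl
  rw [hm]
  push_cast
  ring

open Polynomial Set in
lemma jacobiFun_eq_eval (n : ℕ) (α β : ℝ) {x : ℝ} (hx : x ∈ Ioo (-1:ℝ) 1) :
    jacobiFun n α β x = (1 / (2^n * n.factorial)) * (jacP n α β).eval x := by
  have h1 : (0:ℝ) < 1 - x := by linarith [hx.2]
  have h2 : (0:ℝ) < 1 + x := by linarith [hx.1]
  rw [jacobiFun, iteratedDeriv_formula ((n:ℝ)+α) ((n:ℝ)+β) n x hx]
  rw [jacP, Polynomial.eval_finset_sum]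
  rw [Finset.mul_sum, Finset.mul_sum]
  apply Finset.sum_congr rfl
  intro k hk
  have hk' : k ≤ n := Nat.lt_succ_iff.mp (Finset.mem_range.mp hk)
  simp only [Polynomial.eval_mul, Polynomial.eval_pow, Polynomial.eval_sub, Polynomial.eval_X,
    Polynomial.eval_C, Polynomial.eval_one]
  have e1 : (1 - x) ^ (-α) * (1 - x) ^ ((n:ℝ) + α - n + k) = (x - 1) ^ k * (-1:ℝ)^k := by
    rw [← Real.rpow_add h1]
    have hE : -α + ((n:ℝ) + α - n + k) = ((k:ℕ):ℝ) := by push_cast; ring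
    rw [hE, Real.rpow_natCast, ← mul_pow]
    congr 1
    ring
  have e2 : (1 + x) ^ (-β) * (1 + x) ^ ((n:ℝ) + β - k) = (x + 1) ^ (n - k : ℕ) := by
    rw [← Real.rpow_add h2]
    have hE : -β + ((n:ℝ) + β - k) = (((n - k : ℕ)):ℝ) := by
      rw [Nat.cast_sub hk']
      ring
    rw [hE, Real.rpow_natCast, add_comm]
  have hsgn : (-1:ℝ)^n * (-1:ℝ)^(n+k) = (-1:ℝ)^k := by
    rw [pow_add, ← mul_assoc, ← pow_add, Even.neg_one_pow ⟨n, rfl⟩, one_mul]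
  have hkk : (-1:ℝ)^k * (-1:ℝ)^k = 1 := by
    rw [← pow_add]; exact Even.neg_one_pow ⟨k, rfl⟩
  calc ((-1:ℝ) ^ n / (2 ^ n * n.factorial)) * (1 - x) ^ (-α) * (1 + x) ^ (-β) *
        ((-1:ℝ)^(n+k) * (n.choose k : ℝ) * ffac ((n:ℝ)+α) (n-k) * ffac ((n:ℝ)+β) k *
          (1-x) ^ ((n:ℝ)+α - n + k) * (1+x) ^ ((n:ℝ)+β - k))
      = (1 / (2^n * n.factorial)) * ((n.choose k : ℝ) * ffac ((n:ℝ)+α) (n-k) * ffac ((n:ℝ)+β) k)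
          * (((-1:ℝ)^n * (-1:ℝ)^(n+k)) * (((1-x) ^ (-α) * (1-x) ^ ((n:ℝ)+α - n + k))
            * ((1+x) ^ (-β) * (1+x) ^ ((n:ℝ)+β - k)))) := by ring
    _ = (1 / (2^n * n.factorial)) * ((n.choose k : ℝ) * ffac ((n:ℝ)+α) (n-k) * ffac ((n:ℝ)+β) k)
          * ((-1:ℝ)^k * (((x-1)^k * (-1:ℝ)^k) * (x+1)^(n-k:ℕ))) := by rw [hsgn, e1, e2]
    _ = (1 / (2^n * n.factorial)) * ((n.choose k : ℝ) * ffac ((n:ℝ)+α) (n-k) * ffac ((n:ℝ)+β) k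
          * (x-1)^k * (x+1)^(n-k:ℕ)) * ((-1:ℝ)^k * (-1:ℝ)^k) := by ring
    _ = (1 / (2^n * n.factorial)) * ((n.choose k : ℝ) * ffac ((n:ℝ)+α) (n-k) * ffac ((n:ℝ)+β) k
          * (x-1)^k * (x+1)^(n-k:ℕ)) := by rw [hkk, mul_one]
    _ = (1 / (2^n * n.factorial)) * ((n.choose k : ℝ) * ffac ((n:ℝ)+α) (n-k) * ffac ((n:ℝ)+β) k
          * (x-1)^k * (x - -1)^(n-k:ℕ)) := by norm_num

open Polynomial in
lemma jacP_natDegree (n : ℕ) (α β : ℝ) (hα : -1 < α) (hβ : -1 < β) (hn : 1 ≤ n) :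
    (jacP n α β).natDegree = n ∧ (jacP n α β).coeff n = ffac (2*n + α + β) n ∧
      (0:ℝ) < ffac (2*n + α + β) n := by
  have hLpos : (0:ℝ) < ffac (2*n + α + β) n := by
    apply Finset.prod_pos
    intro i hi
    have h1 : (i:ℝ) + 1 ≤ (n:ℝ) := by exact_mod_cast Finset.mem_range.mp hi
    have h2 : (1:ℝ) ≤ (n:ℝ) := by exact_mod_cast hn
    linarith
  have hc := jacP_coeff_n n α β
  have hle : (jacP n α β).natDegree ≤ n := by
    apply Polynomial.natDegree_sum_le_of_forall_le
    intro k hk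
    have hk' : k ≤ n := Nat.lt_succ_iff.mp (Finset.mem_range.mp hk)
    calc (Polynomial.C ((n.choose k : ℝ) * ffac ((n:ℝ)+α) (n-k) * ffac ((n:ℝ)+β) k)
          * (X - C 1)^k * (X - C (-1))^(n-k)).natDegree
        ≤ (Polynomial.C ((n.choose k : ℝ) * ffac ((n:ℝ)+α) (n-k) * ffac ((n:ℝ)+β) k)
          * (X - C 1)^k).natDegree + ((X - C (-1:ℝ))^(n-k)).natDegree := Polynomial.natDegree_mul_le
      _ ≤ k + (n - k) := by
          gcongr
          · exact Polynomial.natDegree_mul_le.trans (by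
              rw [Polynomial.natDegree_C, Polynomial.natDegree_pow,
                Polynomial.natDegree_X_sub_C, mul_one, zero_add])
          · rw [Polynomial.natDegree_pow, Polynomial.natDegree_X_sub_C, mul_one]
      _ = n := by omega
  have hge : n ≤ (jacP n α β).natDegree :=
    Polynomial.le_natDegree_of_ne_zero (by rw [hc]; exact ne_of_gt hLpos)
  exact ⟨le_antisymm hle hge, hc, hLpos⟩

open Polynomial in
lemma jacP_sum_roots (α β : ℝ) (hα : -1 < α) (hβ : -1 < β) (n : ℕ) (hn : 1 ≤ n)
    (ζ : Fin n → ℝ) (hroot : ∀ i, (jacP n α β).eval (ζ i) = 0)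
    (hinj : Function.Injective ζ) :
    (2*(n:ℝ) + α + β) * ∑ i, ζ i = (n:ℝ) * (β - α) := by
  classical
  obtain ⟨hdeg, hcoeff, hLpos⟩ := jacP_natDegree n α β hα hβ hn
  set P := jacP n α β with hP
  have hP0 : P ≠ 0 := fun h => by simp [h] at hcoeff; exact absurd hcoeff.symm (ne_of_gt hLpos)
  -- the multiset of zeros
  set M : Multiset ℝ := Multiset.map ζ Finset.univ.val with hM
  have hMcard : Multiset.card M = n := by simp [hM]
  have hMnodup : M.Nodup := Multiset.Nodup.map hinj Finset.univ.nodup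
  have hMle : M ≤ P.roots := by
    rw [Multiset.le_iff_count]
    intro a
    by_cases ha : a ∈ M
    · have h1 : M.count a = 1 := by
        have := Multiset.nodup_iff_count_le_one.mp hMnodup a
        have h2 := Multiset.count_pos.mpr ha
        omega
      rw [h1, Nat.one_le_iff_ne_zero, ← Nat.pos_iff_ne_zero, Multiset.count_pos]
      obtain ⟨i, _, rfl⟩ := Multiset.mem_map.mp ha
      exact (Polynomial.mem_roots hP0).mpr (hroot i)
    · simp [Multiset.count_eq_zero_of_notMem ha]
  have hroots : P.roots = M := by
    symm
    apply Multiset.eq_of_le_of_card_le hMle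
    rw [hMcard, ← hdeg]
    exact Polynomial.card_roots' P
  have hrc : P.roots.card = P.natDegree := by rw [hroots, hMcard, hdeg]
  have hfact := Polynomial.C_leadingCoeff_mul_prod_multiset_X_sub_C hrc
  have hlead : P.leadingCoeff = ffac (2*n + α + β) n := by
    rw [Polynomial.leadingCoeff, hdeg]; exact hcoeff
  -- coefficient n - 1
  have hcp : P.coeff (n-1) = ffac (2*n + α + β) n * (-(∑ i, ζ i)) := by
    conv_lhs => rw [← hfact]
    rw [Polynomial.coeff_C_mul, hlead]
    congr 1
    have := Polynomial.multiset_prod_X_sub_C_coeff_card_pred P.roots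
      (by rw [hrc, hdeg]; omega)
    rw [hrc, hdeg] at this
    rw [this, hroots, hM]
    simp [Finset.sum]
  have hcp2 := jacP_coeff_pred n α β hn
  rw [hcp2] at hcp
  -- now extract
  have hff : ffac (2*(n:ℝ) + α + β) n
      = (2*(n:ℝ) + α + β) * ffac (2*(n:ℝ) + α + β - 1) (n-1) := by
    obtain ⟨m, rfl⟩ : ∃ m, n = m + 1 := ⟨n - 1, by omega⟩
    exact ffac_succ' _ m
  rw [hff] at hcp
  have hL'pos : (0:ℝ) < ffac (2*(n:ℝ) + α + β - 1) (n-1) := by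
    apply Finset.prod_pos
    intro i hi
    have h1 : (i:ℝ) + 1 ≤ (n:ℝ) - 1 := by
      have := Finset.mem_range.mp hi
      have h3 : (i:ℝ) + 1 ≤ ((n-1 : ℕ):ℝ) := by exact_mod_cast this
      rw [Nat.cast_sub hn] at h3
      push_cast at h3
      linarith
    have h2 : (1:ℝ) ≤ (n:ℝ) := by exact_mod_cast hn
    linarith
  have key : (2*(n:ℝ)+α+β) * (∑ i, ζ i) * ffac (2*(n:ℝ)+α+β-1) (n-1)
      = ((n:ℝ)*(β-α)) * ffac (2*(n:ℝ)+α+β-1) (n-1) := by linear_combination hcp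
  exact mul_right_cancel₀ (ne_of_gt hL'pos) key

theorem jacobi_zeros_choquet (α β : ℝ) (hα : -1 < α) (hβ : -1 < β)
    (n : ℕ) (hn : 1 ≤ n) (ζ : Fin n → ℝ)
    (hζmem : ∀ i, ζ i ∈ Set.Ioo (-1 : ℝ) 1)
    (hζroot : ∀ i, jacobiFun n α β (ζ i) = 0)
    (hζinj : Function.Injective ζ)
    (f : ℝ → ℝ) (hf : ConvexOn ℝ (Set.Icc (-1 : ℝ) 1) f) :
    (1 / n) * ∑ i, f (ζ i) ≤ ((n + β) * f 1 + (n + α) * f (-1)) / (2 * n + α + β) := by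
  have hn1 : (1:ℝ) ≤ (n:ℝ) := by exact_mod_cast hn
  have hA : (0:ℝ) < 2*(n:ℝ) + α + β := by linarith
  have hnpos : (0:ℝ) < (n:ℝ) := by linarith
  have hroot' : ∀ i, (jacP n α β).eval (ζ i) = 0 := by
    intro i
    have h := hζroot i
    rw [jacobiFun_eq_eval n α β (hζmem i)] at h
    have hne : (1 / (2^n * (n.factorial:ℝ))) ≠ 0 := by positivity
    rcases mul_eq_zero.mp h with h' | h'
    · exact absurd h' hne
    · exact h'
  have hsum := jacP_sum_roots α β hα hβ n hn ζ hroot' hζinj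
  set S := ∑ i, ζ i with hSdef
  have hS : S = (n:ℝ) * (β - α) / (2*(n:ℝ) + α + β) := by
    rw [eq_div_iff (ne_of_gt hA)]
    linear_combination hsum
  have hbd : ∀ i, f (ζ i) ≤ (1 - ζ i)/2 * f (-1) + (1 + ζ i)/2 * f 1 := by
    intro i
    obtain ⟨h1, h2⟩ := hζmem i
    have hm1 : (-1:ℝ) ∈ Set.Icc (-1:ℝ) 1 := by norm_num
    have hp1 : (1:ℝ) ∈ Set.Icc (-1:ℝ) 1 := by norm_num
    have ha : (0:ℝ) ≤ (1 - ζ i)/2 := by linarith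
    have hb : (0:ℝ) ≤ (1 + ζ i)/2 := by linarith
    have hab : (1 - ζ i)/2 + (1 + ζ i)/2 = 1 := by ring
    have h := hf.2 hm1 hp1 ha hb hab
    simp only [smul_eq_mul] at h
    have hx : (1 - ζ i)/2 * (-1) + (1 + ζ i)/2 * 1 = ζ i := by ring
    rwa [hx] at h
  have hsums : ∑ i, f (ζ i) ≤ ((n:ℝ) - S)/2 * f (-1) + ((n:ℝ) + S)/2 * f 1 := by
    calc ∑ i, f (ζ i) ≤ ∑ i, ((1 - ζ i)/2 * f (-1) + (1 + ζ i)/2 * f 1) :=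
          Finset.sum_le_sum (fun i _ => hbd i)
      _ = (∑ i, (1 - ζ i))/2 * f (-1) + (∑ i, (1 + ζ i))/2 * f 1 := by
          rw [Finset.sum_add_distrib, ← Finset.sum_mul, ← Finset.sum_mul,
            ← Finset.sum_div, ← Finset.sum_div]
      _ = ((n:ℝ) - S)/2 * f (-1) + ((n:ℝ) + S)/2 * f 1 := by
          rw [Finset.sum_sub_distrib, Finset.sum_add_distrib, Finset.sum_const,
            Finset.card_univ, Fintype.card_fin]
          simp [hSdef]
  have hmono := mul_le_mul_of_nonneg_left hsums (by positivity : (0:ℝ) ≤ 1/(n:ℝ))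
  refine le_trans hmono (le_of_eq ?_)
  rw [hS]
  have hA' := ne_of_gt hA
  have hn' := ne_of_gt hnpos
  rw [eq_div_iff hA']
  have hD : (n:ℝ) * (β - α) / (2*(n:ℝ) + α + β) * (2*(n:ℝ) + α + β) = (n:ℝ) * (β - α) :=
    div_mul_cancel₀ _ hA'
  have hN : 1 / (n:ℝ) * (n:ℝ) = 1 := one_div_mul_cancel hn'
  linear_combination (1 / (n:ℝ) * (f 1 - f (-1)) / 2) * hD
    + ((2*(n:ℝ) + α + β) * (f (-1) + f 1) / 2 + (β - α) * (f 1 - f (-1)) / 2) * hN
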